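/- Let D ⊆ ℝ², let p be an interior point of D, and let f : D → ℝ be differentiable at p. If f has a strict saddle point at p, then f is a saddle point in the classical sense: ∇f(p) = 0 and f has neither a local maximum nor a local minimum at p. -/

import Mathlib

open Set Filter Topology

/-- `γ : [a, b] → D` is a regular path in `D`: it is continuous on `[a, b]`, maps `[a, b]`
into `D`, is differentiable on `(a, b)`, and its derivative is nonvanishing on `(a, b)`. -/
def IsRegularPath (D : Set (ℝ × ℝ)) (γ : ℝ → ℝ × ℝ) (a b : ℝ) : Prop :=
  a < b ∧ ContinuousOn γ (Set.Icc a b) ∧ Set.MapsTo γ (Set.Icc a b) D ∧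
    ∀ t ∈ Set.Ioo a b, DifferentiableAt ℝ γ t ∧ deriv γ t ≠ 0

/-- A function of one real variable has a strict local maximum at `t`. -/
def IsStrictLocalMax (g : ℝ → ℝ) (t : ℝ) : Prop :=
  ∀ᶠ s in 𝓝[≠] t, g s < g t

/-- A function of one real variable has a strict local minimum at `t`. -/
def IsStrictLocalMin (g : ℝ → ℝ) (t : ℝ) : Prop :=
  ∀ᶠ s in 𝓝[≠] t, g t < g s

/-- `f` has a saddle point at `p`: there are regular paths `γ₁, γ₂` in `D` passing through `p`
and intersecting transversally at `p` (their tangent vectors at `p` are not multiples of each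
other) such that `f` has a local maximum at `p` along `γ₁` and a local minimum at `p`
along `γ₂`. -/
def HasSaddleAt (D : Set (ℝ × ℝ)) (f : ℝ × ℝ → ℝ) (p : ℝ × ℝ) : Prop :=
  ∃ (a₁ b₁ a₂ b₂ t₁ t₂ : ℝ) (γ₁ γ₂ : ℝ → ℝ × ℝ),
    IsRegularPath D γ₁ a₁ b₁ ∧ IsRegularPath D γ₂ a₂ b₂ ∧
    t₁ ∈ Set.Ioo a₁ b₁ ∧ t₂ ∈ Set.Ioo a₂ b₂ ∧ γ₁ t₁ = p ∧ γ₂ t₂ = p ∧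
    (∀ c : ℝ, deriv γ₁ t₁ ≠ c • deriv γ₂ t₂) ∧
    (∀ c : ℝ, deriv γ₂ t₂ ≠ c • deriv γ₁ t₁) ∧
    IsLocalMax (f ∘ γ₁) t₁ ∧ IsLocalMin (f ∘ γ₂) t₂

/-- `f` has a strict saddle point at `p`: as for a saddle point, but with a strict local
maximum along `γ₁` and a strict local minimum along `γ₂`. -/
def HasStrictSaddleAt (D : Set (ℝ × ℝ)) (f : ℝ × ℝ → ℝ) (p : ℝ × ℝ) : Prop :=
  ∃ (a₁ b₁ a₂ b₂ t₁ t₂ : ℝ) (γ₁ γ₂ : ℝ → ℝ × ℝ),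
    IsRegularPath D γ₁ a₁ b₁ ∧ IsRegularPath D γ₂ a₂ b₂ ∧
    t₁ ∈ Set.Ioo a₁ b₁ ∧ t₂ ∈ Set.Ioo a₂ b₂ ∧ γ₁ t₁ = p ∧ γ₂ t₂ = p ∧
    (∀ c : ℝ, deriv γ₁ t₁ ≠ c • deriv γ₂ t₂) ∧
    (∀ c : ℝ, deriv γ₂ t₂ ≠ c • deriv γ₁ t₁) ∧
    IsStrictLocalMax (f ∘ γ₁) t₁ ∧ IsStrictLocalMin (f ∘ γ₂) t₂

/-- If `f : D → ℝ` is differentiable at the interior point `p` and has a strict saddle point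
at `p`, then `p` is a saddle point in the classical sense: `∇f(p) = 0` and `f` has neither a
local maximum nor a local minimum at `p`. -/
theorem strict_saddle_implies_classical_saddle (D : Set (ℝ × ℝ)) (p : ℝ × ℝ)
    (f : ℝ × ℝ → ℝ) (hp : p ∈ interior D) (hf : DifferentiableWithinAt ℝ f D p)
    (hsad : HasStrictSaddleAt D f p) :
    fderivWithin ℝ f D p = 0 ∧ ¬ IsLocalMaxOn f D p ∧ ¬ IsLocalMinOn f D p := by
  obtain ⟨a₁, b₁, a₂, b₂, t₁, t₂, γ₁, γ₂, hγ₁, hγ₂, ht₁, ht₂, hpt₁, hpt₂, hind₁, hind₂,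
    hmax, hmin⟩ := hsad
  have hD : D ∈ 𝓝 p := mem_interior_iff_mem_nhds.mp hp
  have hfd : DifferentiableAt ℝ f p := hf.differentiableAt hD
  have hfw : fderivWithin ℝ f D p = fderiv ℝ f p := fderivWithin_of_mem_nhds hD
  have hdγ₁ := (hγ₁.2.2.2 t₁ ht₁)
  have hdγ₂ := (hγ₂.2.2.2 t₂ ht₂)
  -- local max/min in the non-strict sense
  have hmax' : IsLocalMax (f ∘ γ₁) t₁ := by
    have := hmax
    rw [IsStrictLocalMax, eventually_nhdsWithin_iff] at this
    refine this.mono fun s hs => ?_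
    by_cases h : s = t₁
    · simp [h]
    · exact le_of_lt (hs h)
  have hmin' : IsLocalMin (f ∘ γ₂) t₂ := by
    have := hmin
    rw [IsStrictLocalMin, eventually_nhdsWithin_iff] at this
    refine this.mono fun s hs => ?_
    by_cases h : s = t₂
    · simp [h]
    · exact le_of_lt (hs h)
  -- derivative of composition vanishes
  have hder₁ : fderiv ℝ f p (deriv γ₁ t₁) = 0 := by
    have h1 : deriv (f ∘ γ₁) t₁ = fderiv ℝ f (γ₁ t₁) (deriv γ₁ t₁) :=
      fderiv_comp_deriv t₁ (hpt₁ ▸ hfd) hdγ₁.1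
    have h2 : deriv (f ∘ γ₁) t₁ = 0 := hmax'.deriv_eq_zero
    rw [hpt₁] at h1
    rw [← h1, h2]
  have hder₂ : fderiv ℝ f p (deriv γ₂ t₂) = 0 := by
    have h1 : deriv (f ∘ γ₂) t₂ = fderiv ℝ f (γ₂ t₂) (deriv γ₂ t₂) :=
      fderiv_comp_deriv t₂ (hpt₂ ▸ hfd) hdγ₂.1
    have h2 : deriv (f ∘ γ₂) t₂ = 0 := hmin'.deriv_eq_zero
    rw [hpt₂] at h1
    rw [← h1, h2]
  -- the two tangent vectors are linearly independent, hence span ℝ²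
  have hli : LinearIndependent ℝ ![deriv γ₁ t₁, deriv γ₂ t₂] := by
    rw [linearIndependent_fin2]
    exact ⟨hdγ₂.2, fun c hc => hind₁ c hc.symm⟩
  have hcard : Fintype.card (Fin 2) = Module.finrank ℝ (ℝ × ℝ) := by simp
  let b := basisOfLinearIndependentOfCardEqFinrank hli hcard
  have hb : ⇑b = ![deriv γ₁ t₁, deriv γ₂ t₂] :=
    coe_basisOfLinearIndependentOfCardEqFinrank hli hcard
  have hgrad : fderivWithin ℝ f D p = 0 := by
    rw [hfw]
    apply ContinuousLinearMap.ext
    intro x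
    have hx : x = ∑ i, b.repr x i • b i := (b.sum_repr x).symm
    rw [hx]
    simp only [map_sum, map_smul]
    rw [Fin.sum_univ_two]
    have h0 : b 0 = deriv γ₁ t₁ := by rw [hb]; rfl
    have h1 : b 1 = deriv γ₂ t₂ := by rw [hb]; rfl
    rw [h0, h1, hder₁, hder₂]
    simp
  refine ⟨hgrad, ?_, ?_⟩
  · -- not a local max: use γ₂
    intro h
    have htend : Tendsto γ₂ (𝓝 t₂) (𝓝[D] p) := by
      rw [tendsto_nhdsWithin_iff]
      constructor
      · have := hdγ₂.1.continuousAt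
        rw [ContinuousAt, hpt₂] at this
        exact this
      · filter_upwards [Ioo_mem_nhds ht₂.1 ht₂.2] with s hs
        exact hγ₂.2.2.1 (Set.mem_Icc_of_Ioo hs)
    have h2 : ∀ᶠ s in 𝓝 t₂, f (γ₂ s) ≤ f p := htend.eventually h
    have h3 : ∀ᶠ s in 𝓝[≠] t₂, f (γ₂ s) ≤ f p := nhdsWithin_le_nhds h2
    have h4 := h3.and hmin
    rcases h4.exists with ⟨s, hs1, hs2⟩
    simp only [Function.comp_apply, hpt₂] at hs2
    exact absurd hs1 (not_le.mpr hs2)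
  · -- not a local min: use γ₁
    intro h
    have htend : Tendsto γ₁ (𝓝 t₁) (𝓝[D] p) := by
      rw [tendsto_nhdsWithin_iff]
      constructor
      · have := hdγ₁.1.continuousAt
        rw [ContinuousAt, hpt₁] at this
        exact this
      · filter_upwards [Ioo_mem_nhds ht₁.1 ht₁.2] with s hs
        exact hγ₁.2.2.1 (Set.mem_Icc_of_Ioo hs)
    have h2 : ∀ᶠ s in 𝓝 t₁, f p ≤ f (γ₁ s) := htend.eventually h
    have h3 : ∀ᶠ s in 𝓝[≠] t₁, f p ≤ f (γ₁ s) := nhdsWithin_le_nhds h2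
    have h4 := h3.and hmax
    rcases h4.exists with ⟨s, hs1, hs2⟩
    simp only [Function.comp_apply, hpt₁] at hs2
    exact absurd hs1 (not_le.mpr hs2)
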